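/- For every bounded linear operator A on a complex Hilbert space, (1/2) sqrt( 2ω(A)^4 + (1/8) ‖ (A + A*)² (A − A*)² ‖ ) ≤ ω(A)^2. -/

import Mathlib

variable {H : Type*} [NormedAddCommGroup H] [InnerProductSpace ℂ H] [CompleteSpace H]

/-- The numerical radius of a bounded linear operator. -/
noncomputable def numRadius (A : H →L[ℂ] H) : ℝ :=
  ⨆ x : {x : H // ‖x‖ = 1}, ‖(inner ℂ (A x) (x : H) : ℂ)‖

/-- The absolute value |A| = (A*A)^(1/2). -/
noncomputable def absOp (A : H →L[ℂ] H) : H →L[ℂ] H :=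
  CFC.sqrt (ContinuousLinearMap.adjoint A * A)

/-- Real powers of an operator via continuous functional calculus. -/
noncomputable def opRpow (T : H →L[ℂ] H) (r : ℝ) : H →L[ℂ] H :=
  cfc (fun t : ℝ => t ^ r) T

lemma aux_norm_le (B : H →L[ℂ] H) (hB : ContinuousLinearMap.adjoint B = B) {M : ℝ}
    (hM : 0 ≤ M) (h : ∀ z : H, ‖(inner ℂ (B z) z : ℂ)‖ ≤ M * ‖z‖ ^ 2) : ‖B‖ ≤ M := by
  have hsym : ∀ x y : H, (inner ℂ (B y) x : ℂ) = starRingEnd ℂ (inner ℂ (B x) y) := by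
    intro x y
    have h1 := ContinuousLinearMap.adjoint_inner_left B y x
    rw [hB] at h1
    rw [h1, ← inner_conj_symm]
  have key : ∀ x y : H, (inner ℂ (B x) y : ℂ).re ≤ (M / 4) * (‖x + y‖ ^ 2 + ‖x - y‖ ^ 2) := by
    intro x y
    have hpol : (inner ℂ (B (x + y)) (x + y) : ℂ) - inner ℂ (B (x - y)) (x - y)
        = 2 * (inner ℂ (B x) y + inner ℂ (B y) x) := by
      simp only [map_add, map_sub, inner_add_left, inner_add_right, inner_sub_left,
        inner_sub_right]
      ring
    have hre : 4 * (inner ℂ (B x) y : ℂ).re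
        = (inner ℂ (B (x + y)) (x + y) : ℂ).re - (inner ℂ (B (x - y)) (x - y) : ℂ).re := by
      have h2 := congrArg Complex.re hpol
      simp only [map_add, map_sub, Complex.sub_re, Complex.mul_re, Complex.add_re, hsym x y,
        Complex.conj_re, Complex.conj_im] at h2 ⊢
      simp [inner_add_left, inner_add_right, inner_sub_left, inner_sub_right] at h2 ⊢
      linarith
    have h1 : (inner ℂ (B (x + y)) (x + y) : ℂ).re ≤ M * ‖x + y‖ ^ 2 :=
      le_trans (Complex.re_le_norm _) (h _)
    have h2 : -(M * ‖x - y‖ ^ 2) ≤ (inner ℂ (B (x - y)) (x - y) : ℂ).re := by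
      have ha : |(inner ℂ (B (x - y)) (x - y) : ℂ).re| ≤ M * ‖x - y‖ ^ 2 := by
        have hb := Complex.abs_re_le_norm (inner ℂ (B (x - y)) (x - y) : ℂ)
        exact le_trans hb (h (x - y))
      linarith [(abs_le.mp ha).1]
    linarith
  have keyn : ∀ x : H, ‖x‖ = 1 → ‖B x‖ ≤ M := by
    intro x hx
    rcases eq_or_ne (B x) 0 with h0 | h0
    · simp [h0, hM]
    · have hc0 : (‖B x‖ : ℂ) ≠ 0 := Complex.ofReal_ne_zero.mpr (norm_ne_zero_iff.mpr h0)
      set y : H := (‖B x‖ : ℂ)⁻¹ • B x with hy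
      have hny : ‖y‖ = 1 := by
        rw [hy, norm_smul, norm_inv]
        simp only [Complex.norm_real, norm_norm]
        exact inv_mul_cancel₀ (norm_ne_zero_iff.mpr h0)
      have hin : (inner ℂ (B x) y : ℂ) = (‖B x‖ : ℂ) := by
        rw [hy, inner_smul_right, inner_self_eq_norm_sq_to_K]
        field_simp
        rfl
      have hk := key x y
      rw [hin] at hk
      simp only [Complex.ofReal_re] at hk
      have hpar := parallelogram_law_with_norm ℂ x y
      rw [hx, hny] at hpar
      have he : ‖x + y‖ ^ 2 + ‖x - y‖ ^ 2 = 4 := by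
        rw [pow_two, pow_two]; linarith
      rw [he] at hk
      linarith
  refine ContinuousLinearMap.opNorm_le_bound B hM ?_
  intro x
  rcases eq_or_ne x 0 with rfl | hx0
  · simp
  · have hx : ‖(‖x‖⁻¹ : ℂ) • x‖ = 1 := by
      rw [norm_smul]
      simp [norm_ne_zero_iff.mpr hx0]
    have hkk := keyn _ hx
    rw [map_smul, norm_smul] at hkk
    simp only [norm_inv, Complex.norm_real] at hkk
    have hxpos : (0:ℝ) < ‖x‖ := norm_pos_iff.mpr hx0
    calc ‖B x‖ = ‖x‖ * (‖x‖⁻¹ * ‖B x‖) := by field_simp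
    _ ≤ ‖x‖ * M := by
        apply mul_le_mul_of_nonneg_left _ hxpos.le
        simpa [abs_of_pos hxpos] using hkk
    _ = M * ‖x‖ := mul_comm _ _

lemma aux_inner_le (A : H →L[ℂ] H) (z : H) :
    ‖(inner ℂ (A z) z : ℂ)‖ ≤ numRadius A * ‖z‖ ^ 2 := by
  rcases eq_or_ne z 0 with rfl | hz
  · simp
  · have hz' : ‖z‖ ≠ 0 := norm_ne_zero_iff.mpr hz
    have hc0 : (‖z‖ : ℂ) ≠ 0 := Complex.ofReal_ne_zero.mpr hz'
    set u : H := (‖z‖ : ℂ)⁻¹ • z with hu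
    have hnu : ‖u‖ = 1 := by
      rw [hu, norm_smul, norm_inv]
      simp only [Complex.norm_real, norm_norm]
      exact inv_mul_cancel₀ hz'
    have hbdd : BddAbove (Set.range fun x : {x : H // ‖x‖ = 1} =>
        ‖(inner ℂ (A x) (x : H) : ℂ)‖) := by
      refine ⟨‖A‖, ?_⟩
      rintro _ ⟨x, rfl⟩
      calc ‖(inner ℂ (A x) (x : H) : ℂ)‖ ≤ ‖A (x : H)‖ * ‖(x : H)‖ := norm_inner_le_norm _ _
      _ ≤ (‖A‖ * ‖(x : H)‖) * ‖(x : H)‖ := by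
          exact mul_le_mul_of_nonneg_right (A.le_opNorm _) (norm_nonneg _)
      _ = ‖A‖ := by rw [x.2]; ring
    have hle : ‖(inner ℂ (A u) u : ℂ)‖ ≤ numRadius A :=
      le_ciSup hbdd (⟨u, hnu⟩ : {x : H // ‖x‖ = 1})
    have heq : ‖(inner ℂ (A u) u : ℂ)‖ = ‖z‖⁻¹ ^ 2 * ‖(inner ℂ (A z) z : ℂ)‖ := by
      rw [hu, map_smul, inner_smul_left, inner_smul_right]
      rw [norm_mul, norm_mul]
      simp only [RingHomIsometric.norm_map, norm_inv, Complex.norm_real, norm_norm]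
      ring
    rw [heq] at hle
    have h2 : ‖z‖⁻¹ ^ 2 * ‖(inner ℂ (A z) z : ℂ)‖ * ‖z‖ ^ 2 ≤ numRadius A * ‖z‖ ^ 2 :=
      mul_le_mul_of_nonneg_right hle (by positivity)
    calc ‖(inner ℂ (A z) z : ℂ)‖
        = ‖z‖⁻¹ ^ 2 * ‖(inner ℂ (A z) z : ℂ)‖ * ‖z‖ ^ 2 := by
          field_simp
    _ ≤ numRadius A * ‖z‖ ^ 2 := h2

lemma numRadius_nonneg (A : H →L[ℂ] H) : 0 ≤ numRadius A :=
  Real.iSup_nonneg fun _ => norm_nonneg _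

lemma aux_re_part (A : H →L[ℂ] H) :
    ‖A + ContinuousLinearMap.adjoint A‖ ≤ 2 * numRadius A := by
  refine aux_norm_le _ ?_ (by linarith [numRadius_nonneg A]) ?_
  · rw [map_add, ContinuousLinearMap.adjoint_adjoint, add_comm]
  · intro z
    have h1 : (inner ℂ ((A + ContinuousLinearMap.adjoint A) z) z : ℂ)
        = inner ℂ (A z) z + starRingEnd ℂ (inner ℂ (A z) z) := by
      simp only [ContinuousLinearMap.add_apply, inner_add_left]
      rw [ContinuousLinearMap.adjoint_inner_left, ← inner_conj_symm]
      simp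
    rw [h1]
    calc ‖(inner ℂ (A z) z : ℂ) + starRingEnd ℂ (inner ℂ (A z) z)‖
        ≤ ‖(inner ℂ (A z) z : ℂ)‖ + ‖starRingEnd ℂ (inner ℂ (A z) z)‖ := norm_add_le _ _
    _ = 2 * ‖(inner ℂ (A z) z : ℂ)‖ := by rw [RCLike.norm_conj]; ring
    _ ≤ 2 * (numRadius A * ‖z‖ ^ 2) := by linarith [aux_inner_le A z]
    _ = 2 * numRadius A * ‖z‖ ^ 2 := by ring

lemma aux_im_part (A : H →L[ℂ] H) :
    ‖A - ContinuousLinearMap.adjoint A‖ ≤ 2 * numRadius A := by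
  have hnorm : ‖A - ContinuousLinearMap.adjoint A‖
      = ‖Complex.I • (A - ContinuousLinearMap.adjoint A)‖ := by
    rw [norm_smul, Complex.norm_I, one_mul]
  rw [hnorm]
  refine aux_norm_le _ ?_ (by linarith [numRadius_nonneg A]) ?_
  · rw [← ContinuousLinearMap.star_eq_adjoint, star_smul, star_sub]
    simp only [ContinuousLinearMap.star_eq_adjoint, ContinuousLinearMap.adjoint_adjoint,
      Complex.star_def, Complex.conj_I]
    module
  · intro z
    have h1 : (inner ℂ ((Complex.I • (A - ContinuousLinearMap.adjoint A)) z) z : ℂ)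
        = Complex.I * (starRingEnd ℂ (inner ℂ (A z) z) - inner ℂ (A z) z) := by
      simp only [ContinuousLinearMap.smul_apply, ContinuousLinearMap.sub_apply,
        inner_smul_left, inner_sub_left, Complex.conj_I]
      rw [ContinuousLinearMap.adjoint_inner_left, ← inner_conj_symm]
      simp
      ring
    rw [h1, norm_mul, Complex.norm_I, one_mul]
    calc ‖starRingEnd ℂ (inner ℂ (A z) z) - (inner ℂ (A z) z : ℂ)‖
        ≤ ‖starRingEnd ℂ (inner ℂ (A z) z)‖ + ‖(inner ℂ (A z) z : ℂ)‖ := norm_sub_le _ _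
    _ = 2 * ‖(inner ℂ (A z) z : ℂ)‖ := by rw [RCLike.norm_conj]; ring
    _ ≤ 2 * (numRadius A * ‖z‖ ^ 2) := by linarith [aux_inner_le A z]
    _ = 2 * numRadius A * ‖z‖ ^ 2 := by ring

theorem stmt15 (A : H →L[ℂ] H) :
    (1/2) * Real.sqrt (2 * numRadius A ^ 4 +
      (1/8) * ‖(A + ContinuousLinearMap.adjoint A)^2 * (A - ContinuousLinearMap.adjoint A)^2‖) ≤
    numRadius A ^ 2 := by
  set w := numRadius A with hw
  have hw0 : 0 ≤ w := numRadius_nonneg A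
  set P := A + ContinuousLinearMap.adjoint A
  set Q := A - ContinuousLinearMap.adjoint A
  have hP : ‖P‖ ≤ 2 * w := aux_re_part A
  have hQ : ‖Q‖ ≤ 2 * w := aux_im_part A
  have hN : ‖P ^ 2 * Q ^ 2‖ ≤ 16 * w ^ 4 := by
    calc ‖P ^ 2 * Q ^ 2‖ ≤ ‖P ^ 2‖ * ‖Q ^ 2‖ := norm_mul_le _ _
    _ ≤ (‖P‖ * ‖P‖) * (‖Q‖ * ‖Q‖) := by
        rw [pow_two, pow_two]
        exact mul_le_mul (norm_mul_le _ _) (norm_mul_le _ _) (norm_nonneg _)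
          (mul_nonneg (norm_nonneg _) (norm_nonneg _))
    _ ≤ (2 * w) * (2 * w) * ((2 * w) * (2 * w)) := by
        have h1 : ‖P‖ * ‖P‖ ≤ (2 * w) * (2 * w) :=
          mul_le_mul hP hP (norm_nonneg _) (by linarith)
        have h2 : ‖Q‖ * ‖Q‖ ≤ (2 * w) * (2 * w) :=
          mul_le_mul hQ hQ (norm_nonneg _) (by linarith)
        exact mul_le_mul h1 h2 (mul_nonneg (norm_nonneg _) (norm_nonneg _)) (by positivity)
    _ = 16 * w ^ 4 := by ring
  have hsq : 2 * w ^ 4 + (1/8) * ‖P ^ 2 * Q ^ 2‖ ≤ (2 * w ^ 2) ^ 2 := by nlinarith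
  have := Real.sqrt_le_sqrt hsq
  rw [Real.sqrt_sq (by positivity)] at this
  linarith
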